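/- Semantic correctness of Algorithm 5 (safety task under a safety environment specification): let T₁ be a set of nonempty finite words over A × B, let M₂ be a DFA over A × B with finite state type and accepting set F₂, let T₂ be the set of nonempty finite words accepted by M₂, and define EnvWinsFrom(q) to hold iff there exists an environment strategy σenv such that for every agent strategy σag and every k ≥ 1, M₂.evalFrom q (play(σag, σenv)_{<k}) ∈ F₂. Then the following are equivalent: (i) there exists an agent strategy enforcing Safe T₁ under the environment specification Safe T₂; (ii) there exists an agent strategy σag such that for every σenv, writing π = play(σag, σenv) and run₂(k) = M₂.eval(π_{<k}), for every m ≥ 1: π_{<m} ∈ T₁, or there exists k ≤ m with ¬EnvWinsFrom(run₂(k)) or (k ≥ 1 and run₂(k) ∉ F₂). -/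
import Mathlib


/-- The first `k` letters of an infinite trace. -/
def pre {α : Type} (π : ℕ → α) (k : ℕ) : List α := (List.range k).map π

/-- The finite history of pairs of moves after `k` rounds. -/
def playPrefix {A B : Type} (σag : List B → A) (σenv : List A → B) : ℕ → List (A × B)
  | 0 => []
  | k + 1 =>
      let h := playPrefix σag σenv k
      let a := σag (h.map Prod.snd)
      let b := σenv (h.map Prod.fst ++ [a])
      h ++ [(a, b)]

/-- The infinite play generated by an agent strategy `σag : List B → A`
(the agent moves first) and an environment strategy `σenv : List A → B`:
`a₀ = σag []`, `b₀ = σenv [a₀]`, `a_{i+1} = σag [b₀, …, b_i]`,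
`b_{i+1} = σenv [a₀, …, a_{i+1}]`, and `play σag σenv i = (a_i, b_i)`. -/
def play {A B : Type} (σag : List B → A) (σenv : List A → B) (i : ℕ) : A × B :=
  let h := playPrefix σag σenv i
  let a := σag (h.map Prod.snd)
  let b := σenv (h.map Prod.fst ++ [a])
  (a, b)

/-- Reachability property: some nonempty finite prefix is in `T`. -/
def Reach {A B : Type} (T : Set (List (A × B))) : Set (ℕ → A × B) :=
  {π | ∃ k, 1 ≤ k ∧ pre π k ∈ T}

/-- Safety property: every nonempty finite prefix is in `T`. -/
def Safe {A B : Type} (T : Set (List (A × B))) : Set (ℕ → A × B) :=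
  {π | ∀ k, 1 ≤ k → pre π k ∈ T}

/-- The agent strategy `σag` enforces the property `P`. -/
def AgentEnforces {A B : Type} (σag : List B → A) (P : Set (ℕ → A × B)) : Prop :=
  ∀ σenv : List A → B, play σag σenv ∈ P

/-- The environment strategy `σenv` enforces the property `P`. -/
def EnvEnforces {A B : Type} (σenv : List A → B) (P : Set (ℕ → A × B)) : Prop :=
  ∀ σag : List B → A, play σag σenv ∈ P

/-- The agent strategy `σag` enforces `Task` under the environment
specification `Env`. -/
def EnforcesUnder {A B : Type} (σag : List B → A) (Task Env : Set (ℕ → A × B)) : Prop :=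
  ∀ σenv : List A → B, EnvEnforces σenv Env → play σag σenv ∈ Task

/-- `EnvWinsSafeFrom M q` : the environment has a strategy ensuring that,
starting the run of `M` from state `q`, every state reached after `k ≥ 1`
letters of the play lies in `M.accept`. -/
def EnvWinsSafeFrom {A B Q : Type} (M : DFA (A × B) Q) (q : Q) : Prop :=
  ∃ σenv : List A → B, ∀ σag : List B → A, ∀ k, 1 ≤ k →
    M.evalFrom q (pre (play σag σenv) k) ∈ M.accept


section Aux
variable {A B : Type}

theorem playPrefix_length (σag : List B → A) (σenv : List A → B) :
    ∀ k, (playPrefix σag σenv k).length = k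
  | 0 => rfl
  | k+1 => by simp [playPrefix, playPrefix_length σag σenv k]

theorem playPrefix_succ (σag : List B → A) (σenv : List A → B) (k : ℕ) :
    playPrefix σag σenv (k+1) = playPrefix σag σenv k ++ [play σag σenv k] := rfl

theorem pre_play (σag : List B → A) (σenv : List A → B) :
    ∀ k, pre (play σag σenv) k = playPrefix σag σenv k
  | 0 => rfl
  | k+1 => by
      rw [pre, List.range_succ, List.map_append, playPrefix_succ,
        ← pre_play σag σenv k]; rfl

theorem pre_length {α : Type} (π : ℕ → α) (k : ℕ) : (pre π k).length = k := by
  simp [pre]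

theorem playPrefix_take (σag : List B → A) (σenv : List A → B) {i : ℕ} :
    ∀ {j}, i ≤ j → (playPrefix σag σenv j).take i = playPrefix σag σenv i := by
  intro j hij
  induction j with
  | zero => simp_all [playPrefix]
  | succ j ih =>
      rcases Nat.lt_or_ge i (j+1) with h | h
      · rw [playPrefix_succ, List.take_append_of_le_length
          (by rw [playPrefix_length]; omega), ih (by omega)]
      · have : i = j + 1 := by omega
        subst this
        rw [List.take_of_length_le (by rw [playPrefix_length])]

/-- Shifting an agent strategy: if the agent mimics `σag` for the first `k`
rounds and then plays `σag'` on the suffix, the play against `σenv` is the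
old `k`-prefix followed by the play of `σag'` against the shifted env. -/
theorem shift_play (σag σag' : List B → A) (σenv : List A → B) (k : ℕ) :
    ∀ j, playPrefix (fun s => if s.length < k then σag s else σag' (s.drop k)) σenv (k + j)
      = playPrefix σag σenv k ++
        playPrefix σag' (fun l => σenv ((playPrefix σag σenv k).map Prod.fst ++ l)) j := by
  have base : ∀ i ≤ k, playPrefix (fun s => if s.length < k then σag s else σag' (s.drop k)) σenv i
      = playPrefix σag σenv i := by
    intro i hi
    induction i with
    | zero => rfl
    | succ i ih =>
        rw [playPrefix, playPrefix, ih (by omega)]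
        have hlen : ((playPrefix σag σenv i).map Prod.snd).length = i := by
          simp [playPrefix_length]
        simp only [hlen, if_pos (show i < k by omega)]
  intro j
  induction j with
  | zero => simpa [playPrefix] using base k le_rfl
  | succ j ih =>
      have hk : k + (j + 1) = (k + j) + 1 := rfl
      rw [hk, playPrefix, ih, playPrefix]
      have hlen : ((playPrefix σag σenv k ++
          playPrefix σag' (fun l => σenv ((playPrefix σag σenv k).map Prod.fst ++ l)) j).map
            Prod.snd).length = k + j := by
        simp [playPrefix_length]
      simp only [hlen, if_neg (show ¬ (k + j < k) by omega)]
      set G := playPrefix σag' (fun l => σenv ((playPrefix σag σenv k).map Prod.fst ++ l)) j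
        with hG
      have hdrop : ((playPrefix σag σenv k ++ G).map Prod.snd).drop k = G.map Prod.snd := by
        rw [List.map_append]
        have : ((playPrefix σag σenv k).map Prod.snd).length = k := by
          simp [playPrefix_length]
        rw [List.drop_left' this]
      rw [hdrop]
      simp [List.map_append, List.append_assoc]

end Aux

section Stitch
variable {A B : Type}

open Classical in
/-- The deviation point: least `j` failing
`j < min m l.length ∧ l.take (j+1) = hA.take (j+1)`. -/
noncomputable def devPt (hA : List A) (m : ℕ) (l : List A) : ℕ :=
  Nat.find (p := fun j => ¬(j < min m l.length ∧ l.take (j+1) = hA.take (j+1)))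
    ⟨min m l.length, by simp⟩

theorem devPt_eq (hA : List A) (m : ℕ) (l : List A) (i : ℕ)
    (h1 : ∀ j < i, j < min m l.length ∧ l.take (j+1) = hA.take (j+1))
    (h2 : ¬(i < min m l.length ∧ l.take (i+1) = hA.take (i+1))) :
    devPt hA m l = i := by
  unfold devPt
  classical
  exact (Nat.find_eq_iff _).mpr ⟨h2, fun n hn => not_not_intro (h1 n hn)⟩

/-- Env strategy that follows `σenv` while the agent conforms to `hA`
(up to round `m`), and switches to `σW d` at the deviation point `d`. -/
noncomputable def stitched (hA : List A) (m : ℕ) (σenv : List A → B)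
    (σW : ℕ → List A → B) (l : List A) : B :=
  if l.length ≤ devPt hA m l then σenv l else σW (devPt hA m l) (l.drop (devPt hA m l))

theorem stitched_conform (hA : List A) (m : ℕ) (σenv : List A → B) (σW : ℕ → List A → B)
    (l : List A) (hlen : l.length ≤ m) (hl : l = hA.take l.length) :
    stitched hA m σenv σW l = σenv l := by
  have hd : devPt hA m l = l.length := by
    apply devPt_eq
    · intro j hj
      refine ⟨by omega, ?_⟩
      conv_lhs => rw [hl]
      rw [List.take_take]
      congr 1
      omega
    · intro hc
      omega
  rw [stitched, if_pos (by omega)]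

end Stitch

section Aux2
variable {A B : Type}

theorem playPrefix_succ' (σag : List B → A) (σenv : List A → B) (k : ℕ) :
    playPrefix σag σenv (k+1) = playPrefix σag σenv k ++
      [(σag ((playPrefix σag σenv k).map Prod.snd),
        σenv ((playPrefix σag σenv k).map Prod.fst ++
          [σag ((playPrefix σag σenv k).map Prod.snd)]))] := rfl

theorem play_def (σag : List B → A) (σenv : List A → B) (i : ℕ) :
    play σag σenv i = (σag ((playPrefix σag σenv i).map Prod.snd),
      σenv ((playPrefix σag σenv i).map Prod.fst ++
        [σag ((playPrefix σag σenv i).map Prod.snd)])) := rfl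

theorem envWins_of_henv {Q : Type} (M : DFA (A × B) Q) (σag : List B → A) (σenv : List A → B)
    (henv : ∀ σag' : List B → A, ∀ j, 1 ≤ j → M.eval (playPrefix σag' σenv j) ∈ M.accept)
    (k : ℕ) :
    ∃ σe : List A → B, ∀ σa : List B → A, ∀ j, 1 ≤ j →
      M.evalFrom (M.eval (playPrefix σag σenv k)) (pre (play σa σe) j) ∈ M.accept := by
  refine ⟨fun l => σenv ((playPrefix σag σenv k).map Prod.fst ++ l), fun σag' j hj => ?_⟩
  have h2 := henv (fun s => if s.length < k then σag s else σag' (s.drop k)) (k + j)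
    (by omega)
  rw [shift_play] at h2
  have heq : M.eval (playPrefix σag σenv k ++
        playPrefix σag' (fun l => σenv ((playPrefix σag σenv k).map Prod.fst ++ l)) j)
      = M.evalFrom (M.eval (playPrefix σag σenv k))
        (playPrefix σag' (fun l => σenv ((playPrefix σag σenv k).map Prod.fst ++ l)) j) :=
    M.evalFrom_of_append _ _ _
  rw [heq] at h2
  rw [pre_play]
  exact h2

end Aux2

set_option maxHeartbeats 1000000 in
/-- Semantic correctness of Algorithm 5 (safety task under a safety
environment specification): the agent can enforce `Safe T₁` under `Safe T₂`
iff it has a strategy such that against every environment strategy, for every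
time `m ≥ 1`, the prefix of the play is in `T₁`, or by time `m` the run of
`M₂` has left the environment's safety winning region or left `M₂.accept`
(at a time `k ≥ 1`). -/
theorem alg5_correctness {A B Q₂ : Type}
    [Fintype A] [Fintype B] [Nonempty A] [Nonempty B] [Fintype Q₂]
    (T₁ : Set (List (A × B))) (M₂ : DFA (A × B) Q₂)
    (T₂ : Set (List (A × B))) (hT₂ : T₂ = {w | w ≠ [] ∧ w ∈ M₂.accepts}) :
    (∃ σag : List B → A, EnforcesUnder σag (Safe T₁) (Safe T₂)) ↔
      (∃ σag : List B → A, ∀ σenv : List A → B, ∀ m : ℕ, 1 ≤ m →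
        pre (play σag σenv) m ∈ T₁ ∨
        ∃ k : ℕ, k ≤ m ∧
          (¬ EnvWinsSafeFrom M₂ (M₂.eval (pre (play σag σenv) k)) ∨
            (1 ≤ k ∧ M₂.eval (pre (play σag σenv) k) ∉ M₂.accept))) := by
  classical
  constructor
  · -- hard direction
    rintro ⟨σag, hσ⟩
    refine ⟨σag, fun σenv m hm => ?_⟩
    by_contra hcon
    push_neg at hcon
    obtain ⟨hT1, hk⟩ := hcon
    set h := playPrefix σag σenv m with hh
    set hA := h.map Prod.fst with hhA
    have hlen : h.length = m := by rw [hh, playPrefix_length]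
    have hAlen : hA.length = m := by rw [hhA, List.length_map, hlen]
    have htk : ∀ {k}, k ≤ m → h.take k = playPrefix σag σenv k := by
      intro k hkm; rw [hh]; exact playPrefix_take σag σenv hkm
    have hAtk : ∀ {k}, k ≤ m → hA.take k = (playPrefix σag σenv k).map Prod.fst := by
      intro k hkm; rw [hhA, ← List.map_take, htk hkm]
    -- choose the environment's winning strategies
    have hwin' : ∀ k, ∃ σe : List A → B, k ≤ m → ∀ σa : List B → A, ∀ j, 1 ≤ j →
        M₂.evalFrom (M₂.eval (h.take k)) (playPrefix σa σe j) ∈ M₂.accept := by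
      intro k
      by_cases hkm : k ≤ m
      · obtain ⟨σe, hσe⟩ := (hk k hkm).1
        refine ⟨σe, fun _ σa j hj => ?_⟩
        have hx := hσe σa j hj
        rw [pre_play, pre_play] at hx
        rwa [htk hkm]
      · exact ⟨fun _ => Classical.arbitrary B, fun hc => absurd hc hkm⟩
    choose σW hσW using hwin'
    set σenv' := stitched hA m σenv σW with hσenv'
    have hconfA : ∀ j ≤ m, stitched hA m σenv σW (hA.take j) = σenv (hA.take j) := by
      intro j hj
      apply stitched_conform
      · rw [List.length_take, hAlen]; omega
      · rw [List.length_take, hAlen]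
        congr 1
        omega
    -- the play against the stitched environment agrees with the original play up to m
    have claimA : ∀ i ≤ m, playPrefix σag σenv' i = h.take i := by
      intro i hi
      induction i with
      | zero => simp [playPrefix]
      | succ i ih =>
        have hi' : i ≤ m := by omega
        have henvin : (playPrefix σag σenv i).map Prod.fst ++
            [σag ((playPrefix σag σenv i).map Prod.snd)] = hA.take (i+1) := by
          rw [hAtk hi, playPrefix_succ']
          simp
        rw [playPrefix_succ', ih hi', htk hi', htk hi, playPrefix_succ']
        congr 2
        rw [hσenv', henvin, hconfA (i+1) hi, ← henvin]
    -- the stitched environment enforces Safe T₂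
    have claimB : EnvEnforces σenv' (Safe T₂) := by
      intro σag' k hk1
      have hexD : ∃ i, ¬(i < m ∧ playPrefix σag' σenv' (i+1) = h.take (i+1)) :=
        ⟨m, fun hc => absurd hc.1 (lt_irrefl m)⟩
      set D := Nat.find hexD with hD
      have hDspec := Nat.find_spec hexD
      rw [← hD] at hDspec
      have hDlt : ∀ i < D, i < m ∧ playPrefix σag' σenv' (i+1) = h.take (i+1) :=
        fun i hi => not_not.mp (Nat.find_min hexD hi)
      have hDm : D ≤ m := by
        by_contra hc
        have := (hDlt m (by omega)).1
        omega
      have hB1 : ∀ i ≤ D, playPrefix σag' σenv' i = h.take i := by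
        intro i hi
        cases i with
        | zero => simp [playPrefix]
        | succ i => exact (hDlt i (by omega)).2
      have htkD : h.take D = playPrefix σag σenv D := htk hDm
      have hAtkD : (h.take D).map Prod.fst = hA.take D := by
        rw [hhA, List.map_take]
      have hAtkDlen : (hA.take D).length = D := by
        rw [List.length_take, hAlen]; omega
      -- if D < m then the agent deviates at round D
      have hDev : D < m → σag' ((h.take D).map Prod.snd) ≠ (play σag σenv D).1 := by
        intro hDm' hceq
        apply hDspec
        refine ⟨hDm', ?_⟩
        have henvin : (h.take D).map Prod.fst ++ [σag' ((h.take D).map Prod.snd)]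
            = hA.take (D+1) := by
          rw [hceq, htkD, hAtk hDm', playPrefix_succ']
          simp [play_def]
        have hbval : σenv' ((h.take D).map Prod.fst ++ [σag' ((h.take D).map Prod.snd)])
            = σenv ((h.take D).map Prod.fst ++ [σag' ((h.take D).map Prod.snd)]) := by
          rw [hσenv', henvin, hconfA (D+1) hDm', ← henvin]
        rw [playPrefix_succ', hB1 D le_rfl, hbval, hceq, htkD,
          htk (show D+1 ≤ m by omega), playPrefix_succ']
        simp [play_def]
      -- after the deviation, the winning strategy takes over
      have hB2 : ∀ j, playPrefix σag' σenv' (D + j)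
          = h.take D ++ playPrefix (fun s => σag' ((h.take D).map Prod.snd ++ s)) (σW D) j := by
        intro j
        induction j with
        | zero => simpa [playPrefix] using hB1 D le_rfl
        | succ j ih =>
          have hDj : D + (j+1) = (D + j) + 1 := rfl
          set σag3 : List B → A := fun s => σag' ((h.take D).map Prod.snd ++ s) with hσag3
          set G := playPrefix σag3 (σW D) j with hG
          have hGlen : G.length = j := by rw [hG, playPrefix_length]
          have hagmove : σag' ((h.take D ++ G).map Prod.snd) = σag3 (G.map Prod.snd) := by
            rw [List.map_append, hσag3]
          have hX : (h.take D ++ G).map Prod.fst ++ [σag' ((h.take D ++ G).map Prod.snd)]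
              = hA.take D ++ (playPrefix σag3 (σW D) (j+1)).map Prod.fst := by
            rw [hagmove, List.map_append, hAtkD, playPrefix_succ' σag3 (σW D), List.map_append,
              List.append_assoc]
            rfl
          have hXlen : ((playPrefix σag3 (σW D) (j+1)).map Prod.fst).length = j + 1 := by
            rw [List.length_map, playPrefix_length]
          set X := (playPrefix σag3 (σW D) (j+1)).map Prod.fst with hXdef
          have hdevpt : devPt hA m (hA.take D ++ X) = D := by
            apply devPt_eq
            · intro i hi
              constructor
              · have : (hA.take D ++ X).length = D + (j+1) := by
                  rw [List.length_append, hAtkDlen, hXlen]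
                omega
              · rw [List.take_append_of_le_length (by rw [hAtkDlen]; omega),
                  List.take_take]
                congr 1
                omega
            · rintro ⟨hlt, heq⟩
              have hDm' : D < m := by
                have : (hA.take D ++ X).length = D + (j+1) := by
                  rw [List.length_append, hAtkDlen, hXlen]
                omega
              -- compute the (D+1)-th prefix on both sides
              have hL : (hA.take D ++ X).take (D+1) = hA.take D ++ [σag3 []] := by
                rw [List.take_append,
                  List.take_of_length_le (by rw [hAtkDlen]; omega), hAtkDlen]
                congr 1
                have h1 : D + 1 - D = 1 := by omega
                rw [h1, hXdef, ← List.map_take, playPrefix_take σag3 (σW D) (by omega : 1 ≤ j + 1)]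
                rfl
              have hR : hA.take (D+1) = hA.take D ++ [(play σag σenv D).1] := by
                rw [hAtk (show D+1 ≤ m by omega), playPrefix_succ', List.map_append,
                  ← htkD, hAtkD]
                simp [play_def, ← List.map_take, htkD]
              rw [hL, hR] at heq
              have := List.append_cancel_left heq
              simp only [List.cons.injEq] at this
              apply hDev hDm'
              rw [← this.1, hσag3]
              simp only []
              rw [List.append_nil]
          have hXeq : X = G.map Prod.fst ++ [σag3 (G.map Prod.snd)] := by
            rw [hXdef, playPrefix_succ' σag3 (σW D), List.map_append, ← hG]
            rfl
          have henvval : σenv' ((h.take D ++ G).map Prod.fst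
                ++ [σag' ((h.take D ++ G).map Prod.snd)])
              = σW D (G.map Prod.fst ++ [σag3 (G.map Prod.snd)]) := by
            rw [hX, hσenv', stitched, hdevpt,
              if_neg (by rw [List.length_append, hAtkDlen, hXlen]; omega),
              List.drop_left' hAtkDlen, hXeq]
          rw [hDj, playPrefix_succ', ih, playPrefix_succ' σag3 (σW D), ← hG,
            ← List.append_assoc]
          congr 1
          rw [henvval, hagmove]
      -- finish claimB
      rw [hT₂]
      refine ⟨?_, ?_⟩
      · intro hc
        have hlc := congrArg List.length hc
        rw [pre_length] at hlc
        simp at hlc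
        omega
      · rw [DFA.mem_accepts, pre_play]
        rcases le_or_gt k D with hkD | hkD
        · rw [hB1 k hkD, htk (le_trans hkD hDm)]
          have h2 := (hk k (le_trans hkD hDm)).2 hk1
          rwa [pre_play] at h2
        · obtain ⟨j, rfl⟩ : ∃ j, k = D + j := ⟨k - D, by omega⟩
          rw [hB2 j,
            show M₂.eval (h.take D ++
                playPrefix (fun s => σag' ((h.take D).map Prod.snd ++ s)) (σW D) j)
              = M₂.evalFrom (M₂.eval (h.take D))
                (playPrefix (fun s => σag' ((h.take D).map Prod.snd ++ s)) (σW D) j)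
              from M₂.evalFrom_of_append _ _ _]
          exact hσW D hDm _ j (by omega)
    -- conclude
    have hsafe := hσ σenv' claimB m hm
    rw [pre_play, claimA m le_rfl,
      List.take_of_length_le (le_of_eq hlen)] at hsafe
    rw [pre_play] at hT1
    exact hT1 hsafe
  · -- easy direction
    rintro ⟨σag, hσ⟩
    refine ⟨σag, fun σenv henv m hm => ?_⟩
    have henv' : ∀ σag' : List B → A, ∀ j, 1 ≤ j →
        M₂.eval (playPrefix σag' σenv j) ∈ M₂.accept := by
      intro σag' j hj
      have h := henv σag' j hj
      rw [hT₂] at h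
      have h2 := h.2
      rwa [DFA.mem_accepts, pre_play] at h2
    rcases hσ σenv m hm with h1 | ⟨k, hkm, h2 | ⟨hk1, h3⟩⟩
    · exact h1
    · exfalso
      apply h2
      rw [pre_play]
      exact envWins_of_henv M₂ σag σenv henv' k
    · exact absurd (by rw [pre_play]; exact henv' σag k hk1) h3
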